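/- For the 4-leaf tree with clades {1,2} and {3,4}, the quantity (p12·p34 − p14·p23)·det(Σ_θ) equals θ5θ6 + θ5θ7 + θ6θ7; in particular it is nonnegative when θ5, θ6, θ7 ≥ 0. -/

import Mathlib

set_option maxHeartbeats 1000000 in
theorem stmt_15 (θ1 θ2 θ3 θ4 θ5 θ6 θ7 : ℝ)
    (S : Matrix (Fin 4) (Fin 4) ℝ)
    (hS : S = !![θ1 + θ5 + θ7, θ5 + θ7, θ7, θ7;
                 θ5 + θ7, θ2 + θ5 + θ7, θ7, θ7;
                 θ7, θ7, θ3 + θ6 + θ7, θ6 + θ7;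
                 θ7, θ7, θ6 + θ7, θ4 + θ6 + θ7])
    (hdet : S.det ≠ 0) (K : Matrix (Fin 4) (Fin 4) ℝ) (hK : K = S⁻¹)
    (p12 p14 p23 p34 : ℝ)
    (hp12 : p12 = -(K 0 1)) (hp14 : p14 = -(K 0 3))
    (hp23 : p23 = -(K 1 2)) (hp34 : p34 = -(K 2 3)) :
    (p12 * p34 - p14 * p23) * S.det = θ5 * θ6 + θ5 * θ7 + θ6 * θ7 ∧
    (0 ≤ θ5 → 0 ≤ θ6 → 0 ≤ θ7 → 0 ≤ (p12 * p34 - p14 * p23) * S.det) := by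
  obtain ⟨A, hA⟩ : ∃ A : Matrix (Fin 4) (Fin 4) ℝ, A =
    !![θ4*θ6*θ7 + θ4*θ5*θ7 + θ4*θ5*θ6 + θ3*θ6*θ7 + θ3*θ5*θ7 + θ3*θ5*θ6 + θ3*θ4*θ7 + θ3*θ4*θ5 + θ2*θ4*θ7 + θ2*θ4*θ6 + θ2*θ3*θ7 + θ2*θ3*θ6 + θ2*θ3*θ4, -(θ4*θ6*θ7 + θ4*θ5*θ7 + θ4*θ5*θ6 + θ3*θ6*θ7 + θ3*θ5*θ7 + θ3*θ5*θ6 + θ3*θ4*θ7 + θ3*θ4*θ5), -(θ2*θ4*θ7), -(θ2*θ3*θ7);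
       -(θ4*θ6*θ7 + θ4*θ5*θ7 + θ4*θ5*θ6 + θ3*θ6*θ7 + θ3*θ5*θ7 + θ3*θ5*θ6 + θ3*θ4*θ7 + θ3*θ4*θ5), θ4*θ6*θ7 + θ4*θ5*θ7 + θ4*θ5*θ6 + θ3*θ6*θ7 + θ3*θ5*θ7 + θ3*θ5*θ6 + θ3*θ4*θ7 + θ3*θ4*θ5 + θ1*θ4*θ7 + θ1*θ4*θ6 + θ1*θ3*θ7 + θ1*θ3*θ6 + θ1*θ3*θ4, -(θ1*θ4*θ7), -(θ1*θ3*θ7);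
       -(θ2*θ4*θ7), -(θ1*θ4*θ7), θ2*θ6*θ7 + θ2*θ5*θ7 + θ2*θ5*θ6 + θ2*θ4*θ7 + θ2*θ4*θ5 + θ1*θ6*θ7 + θ1*θ5*θ7 + θ1*θ5*θ6 + θ1*θ4*θ7 + θ1*θ4*θ5 + θ1*θ2*θ7 + θ1*θ2*θ6 + θ1*θ2*θ4, -(θ2*θ6*θ7 + θ2*θ5*θ7 + θ2*θ5*θ6 + θ1*θ6*θ7 + θ1*θ5*θ7 + θ1*θ5*θ6 + θ1*θ2*θ7 + θ1*θ2*θ6);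
       -(θ2*θ3*θ7), -(θ1*θ3*θ7), -(θ2*θ6*θ7 + θ2*θ5*θ7 + θ2*θ5*θ6 + θ1*θ6*θ7 + θ1*θ5*θ7 + θ1*θ5*θ6 + θ1*θ2*θ7 + θ1*θ2*θ6), θ2*θ6*θ7 + θ2*θ5*θ7 + θ2*θ5*θ6 + θ2*θ3*θ7 + θ2*θ3*θ5 + θ1*θ6*θ7 + θ1*θ5*θ7 + θ1*θ5*θ6 + θ1*θ3*θ7 + θ1*θ3*θ5 + θ1*θ2*θ7 + θ1*θ2*θ6 + θ1*θ2*θ3] := ⟨_, rfl⟩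
  have hdval : S.det = θ2*θ4*θ6*θ7 + θ2*θ4*θ5*θ7 + θ2*θ4*θ5*θ6 + θ2*θ3*θ6*θ7 + θ2*θ3*θ5*θ7 +
      θ2*θ3*θ5*θ6 + θ2*θ3*θ4*θ7 + θ2*θ3*θ4*θ5 + θ1*θ4*θ6*θ7 + θ1*θ4*θ5*θ7 + θ1*θ4*θ5*θ6 +
      θ1*θ3*θ6*θ7 + θ1*θ3*θ5*θ7 + θ1*θ3*θ5*θ6 + θ1*θ3*θ4*θ7 + θ1*θ3*θ4*θ5 + θ1*θ2*θ4*θ7 +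
      θ1*θ2*θ4*θ6 + θ1*θ2*θ3*θ7 + θ1*θ2*θ3*θ6 + θ1*θ2*θ3*θ4 := by
    rw [hS]
    simp [Matrix.det_succ_row_zero, Fin.sum_univ_succ, Matrix.submatrix_apply, Fin.succAbove]
    ring
  have hSA : S * A = S.det • (1 : Matrix (Fin 4) (Fin 4) ℝ) := by
    rw [hdval, hS, hA]
    ext i j
    fin_cases i <;> fin_cases j <;>
      simp [Matrix.mul_apply, Fin.sum_univ_four, Matrix.one_apply] <;> ring
  have hinv : K = (S.det)⁻¹ • A := by
    rw [hK]
    refine Matrix.inv_eq_right_inv ?_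
    rw [Matrix.mul_smul, hSA, smul_smul, inv_mul_cancel₀ hdet, one_smul]
  have hK01 : K 0 1 = (S.det)⁻¹ * A 0 1 := by rw [hinv]; simp
  have hK03 : K 0 3 = (S.det)⁻¹ * A 0 3 := by rw [hinv]; simp
  have hK12 : K 1 2 = (S.det)⁻¹ * A 1 2 := by rw [hinv]; simp
  have hK23 : K 2 3 = (S.det)⁻¹ * A 2 3 := by rw [hinv]; simp
  have hA01 : A 0 1 = -(θ4*θ6*θ7 + θ4*θ5*θ7 + θ4*θ5*θ6 + θ3*θ6*θ7 + θ3*θ5*θ7 + θ3*θ5*θ6 + θ3*θ4*θ7 + θ3*θ4*θ5) := by rw [hA]; norm_num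
  have hA03 : A 0 3 = -(θ2*θ3*θ7) := by rw [hA]; rfl
  have hA12 : A 1 2 = -(θ1*θ4*θ7) := by rw [hA]; rfl
  have hA23 : A 2 3 = -(θ2*θ6*θ7 + θ2*θ5*θ7 + θ2*θ5*θ6 + θ1*θ6*θ7 + θ1*θ5*θ7 + θ1*θ5*θ6 + θ1*θ2*θ7 + θ1*θ2*θ6) := by rw [hA]; rfl
  have key : (p12 * p34 - p14 * p23) * S.det = θ5 * θ6 + θ5 * θ7 + θ6 * θ7 := by
    rw [hp12, hp14, hp23, hp34, hK01, hK03, hK12, hK23]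
    have hpoly : A 0 1 * A 2 3 - A 0 3 * A 1 2 = (θ5 * θ6 + θ5 * θ7 + θ6 * θ7) * S.det := by
      rw [hA01, hA03, hA12, hA23, hdval]; ring
    have expand : (-(S.det⁻¹ * A 0 1)) * (-(S.det⁻¹ * A 2 3)) -
        (-(S.det⁻¹ * A 0 3)) * (-(S.det⁻¹ * A 1 2)) =
        S.det⁻¹ * S.det⁻¹ * (A 0 1 * A 2 3 - A 0 3 * A 1 2) := by ring
    rw [expand, hpoly]
    have step : S.det⁻¹ * S.det⁻¹ * ((θ5 * θ6 + θ5 * θ7 + θ6 * θ7) * S.det) * S.det =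
        (θ5 * θ6 + θ5 * θ7 + θ6 * θ7) * ((S.det⁻¹ * S.det) * (S.det⁻¹ * S.det)) := by ring
    rw [step, inv_mul_cancel₀ hdet]; ring
  refine ⟨key, fun h5 h6 h7 => ?_⟩
  rw [key]
  positivity
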